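/- arXiv:1402.5499 — 7 statements merged into one kernel-verified Lean document; each statement's English description precedes it below -/
import Mathlib

section
/- For every element a of the group algebra ℂ[G], the integral ∫_{B_H} κ(a) dν equals the coefficient of the identity element of G in a. (Thus κ carries the canonical trace of the group algebra to integration against ν.) -/
open MeasureTheory Filter Topology
open scoped ENNReal

/-- The Rademacher function `R_S(x) = ∏_{s ∈ S} (−1)^{x(s)}` on the Bernoulli space
`B_H = ∏_{h ∈ H} {0,1}` (with `{0,1}` encoded as `Bool`); `R_∅ ≡ 1`. -/
def Rademacher {H : Type*} (S : Finset H) : (H → Bool) → ℂ := fun x =>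
  ∏ s ∈ S, (if x s then (-1 : ℂ) else 1)

/-- `ν` is the product of the uniform (`1/2`, `1/2`) measures on the factors: it is a
probability measure giving each cylinder set, prescribed on a finite set `T` of
coordinates, measure `(1/2)^{|T|}`. -/
def IsBernoulliMeasure {H : Type*} (ν : Measure (H → Bool)) : Prop :=
  IsProbabilityMeasure ν ∧
  ∀ (T : Finset H) (b : H → Bool),
    ν {x : H → Bool | ∀ h ∈ T, x h = b h} = (1 / 2 : ℝ≥0∞) ^ T.card

/-- `G = ⊕_{h ∈ H} ℤ/2ℤ`, written multiplicatively. -/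
abbrev BernoulliDual (H : Type*) : Type _ := Multiplicative (H →₀ ZMod 2)

/-- For a finite `S ⊆ H`, `t_S ∈ G` is the element equal to `1` at the coordinates in
`S` and `0` elsewhere (so that `t_S · t_{S'} = t_{S △ S'}`). -/
noncomputable def tS {H : Type*} [DecidableEq H] (S : Finset H) : BernoulliDual H :=
  Multiplicative.ofAdd (∑ s ∈ S, Finsupp.single s (1 : ZMod 2))

lemma rad_meas {H : Type*} (S : Finset H) : Measurable (Rademacher S) := by
  unfold Rademacher
  exact Finset.measurable_prod S fun s _ =>
    (measurable_of_countable (fun b : Bool => if b then (-1:ℂ) else 1)).comp (measurable_pi_apply s)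

lemma cyl_meas {H : Type*} (S : Finset H) (b : H → Bool) :
    MeasurableSet {x : H → Bool | ∀ h ∈ S, x h = b h} := by
  have : {x : H → Bool | ∀ h ∈ S, x h = b h} = ⋂ h ∈ (S : Set H), (fun x : H → Bool => x h) ⁻¹' {b h} := by
    ext x; simp
  rw [this]
  exact MeasurableSet.biInter S.countable_toSet
    (fun h _ => (measurable_pi_apply h) (measurableSet_singleton _))

lemma rad_rep {H : Type*} [DecidableEq H] (S : Finset H) (x : H → Bool) :
    Rademacher S x = ∑ T ∈ S.powerset,
      Set.indicator {y : H → Bool | ∀ h ∈ S, y h = decide (h ∈ T)} (fun _ => ((-1 : ℂ)) ^ T.card) x := by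
  have h0 : Rademacher S x = (-1 : ℂ) ^ (S.filter (fun h => x h = true)).card := by
    unfold Rademacher
    rw [Finset.prod_ite, Finset.prod_const, Finset.prod_const, one_pow, mul_one]
  rw [h0, Finset.sum_eq_single_of_mem (S.filter (fun h => x h = true))
    (Finset.mem_powerset.2 (Finset.filter_subset _ _))]
  · rw [Set.indicator_of_mem]
    intro h hh
    simp [hh]
  · intro T hT hne
    rw [Set.indicator_of_notMem]
    intro hx
    apply hne
    ext h
    simp only [Finset.mem_filter]
    constructor
    · intro hhT
      have hhS : h ∈ S := Finset.mem_powerset.1 hT hhT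
      exact ⟨hhS, by simpa [hhT] using hx h hhS⟩
    · rintro ⟨hhS, hxh⟩
      have := hx h hhS
      rw [hxh] at this
      simpa using this.symm

lemma rad_integral {H : Type*} [DecidableEq H] (ν : Measure (H → Bool))
    (hν : IsBernoulliMeasure ν) (S : Finset H) :
    ∫ x, Rademacher S x ∂ν = if S = ∅ then 1 else 0 := by
  haveI := hν.1
  have hrep : (fun x => Rademacher S x) = fun x => ∑ T ∈ S.powerset,
      Set.indicator {y : H → Bool | ∀ h ∈ S, y h = decide (h ∈ T)} (fun _ => ((-1 : ℂ)) ^ T.card) x :=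
    funext (rad_rep S)
  rw [hrep, integral_finset_sum _ (fun T _ =>
    (integrable_const _).indicator (cyl_meas S _))]
  have hval : ∀ T ∈ S.powerset,
      ∫ x, Set.indicator {y : H → Bool | ∀ h ∈ S, y h = decide (h ∈ T)}
        (fun _ => ((-1 : ℂ)) ^ T.card) x ∂ν
      = ((1/2 : ℝ)^S.card : ℝ) • ((-1 : ℂ)) ^ T.card := by
    intro T _
    rw [integral_indicator_const _ (cyl_meas S _), measureReal_def, hν.2 S (fun h => decide (h ∈ T))]
    congr 1
    simp [ENNReal.toReal_pow]
  rw [Finset.sum_congr rfl hval, ← Finset.smul_sum]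
  have hsum : ∑ T ∈ S.powerset, ((-1 : ℂ)) ^ T.card = if S = ∅ then 1 else 0 := by
    have := Finset.prod_add (fun _ : H => (-1 : ℂ)) (fun _ => 1) S
    simp only [Finset.prod_const, one_pow, mul_one] at this
    rcases eq_or_ne S ∅ with rfl | hS
    · simp
    · have hc : S.card ≠ 0 := by simpa [Finset.card_eq_zero] using hS
      rw [if_neg hS, ← this]
      norm_num [zero_pow hc]
  rw [hsum]
  rcases eq_or_ne S ∅ with rfl | hS
  · simp
  · simp [hS]

lemma rad_integrable {H : Type*} (ν : Measure (H → Bool)) [IsProbabilityMeasure ν]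
    (S : Finset H) : Integrable (Rademacher S) ν := by
  refine (integrable_const (1 : ℝ)).mono' (rad_meas S).aestronglyMeasurable
    (Filter.Eventually.of_forall fun x => ?_)
  unfold Rademacher
  calc ‖∏ s ∈ S, (if x s then (-1 : ℂ) else 1)‖
      = ∏ s ∈ S, ‖(if x s then (-1 : ℂ) else 1)‖ := norm_prod _ _
    _ = 1 := by
        refine Finset.prod_eq_one fun s _ => ?_
        by_cases h : x s <;> simp [h]
    _ ≤ 1 := le_refl 1

lemma tS_support {H : Type*} [DecidableEq H] (g : BernoulliDual H) :
    tS (Multiplicative.toAdd g).support = g := by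
  set f := Multiplicative.toAdd g with hf
  have h1 : ∀ s ∈ f.support, Finsupp.single s (1 : ZMod 2) = Finsupp.single s (f s) := by
    intro s hs
    have : f s ≠ 0 := Finsupp.mem_support_iff.1 hs
    have h2 : ∀ a : ZMod 2, a ≠ 0 → a = 1 := by decide
    have : f s = 1 := h2 _ this
    rw [this]
  unfold tS
  rw [Finset.sum_congr rfl h1]
  have : ∑ s ∈ f.support, Finsupp.single s (f s) = f := Finsupp.sum_single f
  rw [this]
  rfl

/-- for every `a ∈ ℂ[G]`, `∫_{B_H} κ(a) dν` equals the coefficient of the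
identity element of `G` in `a`; that is, `κ` carries the canonical trace of the group
algebra to integration against `ν`. -/
theorem stmt2 {H : Type*} [Group H] [Countable H] [Infinite H] [DecidableEq H]
    (ν : Measure (H → Bool)) (hν : IsBernoulliMeasure ν)
    (κ : MonoidAlgebra ℂ (BernoulliDual H) →ₐ[ℂ] ((H → Bool) → ℂ))
    (hκ : ∀ S : Finset H, κ (MonoidAlgebra.of ℂ (BernoulliDual H) (tS S)) = Rademacher S)
    (a : MonoidAlgebra ℂ (BernoulliDual H)) :
    ∫ x, κ a x ∂ν = a.coeff 1 := by
  haveI := hν.1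
  have hsingle : ∀ (g : BernoulliDual H) (c : ℂ),
      (κ (MonoidAlgebra.single g c) : (H → Bool) → ℂ)
        = c • Rademacher (Multiplicative.toAdd g).support := by
    intro g c
    have h1 : (MonoidAlgebra.single g c : MonoidAlgebra ℂ (BernoulliDual H))
        = c • (MonoidAlgebra.of ℂ (BernoulliDual H) (tS (Multiplicative.toAdd g).support)) := by
      rw [tS_support]
      simp [MonoidAlgebra.of_apply, MonoidAlgebra.smul_single', mul_one]
    rw [h1, _root_.map_smul, hκ]
  have hint : ∀ (g : BernoulliDual H) (c : ℂ),
      Integrable (fun x => κ (MonoidAlgebra.single g c) x) ν := by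
    intro g c
    simp only [hsingle, Pi.smul_apply]
    exact (rad_integrable ν _).smul c
  have hval : ∀ (g : BernoulliDual H) (c : ℂ),
      ∫ x, κ (MonoidAlgebra.single g c) x ∂ν = (MonoidAlgebra.single g c).coeff 1 := by
    intro g c
    simp only [hsingle, Pi.smul_apply]
    rw [integral_smul, rad_integral ν hν]
    have hiff : (Multiplicative.toAdd g).support = ∅ ↔ g = 1 := by
      rw [Finsupp.support_eq_empty]
      constructor
      · intro h
        have : Multiplicative.toAdd g = Multiplicative.toAdd (1 : BernoulliDual H) := h
        exact Multiplicative.toAdd.injective this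
      · intro h; rw [h]; rfl
    rcases eq_or_ne g 1 with rfl | hg
    · rw [if_pos (hiff.2 rfl)]
      simp [MonoidAlgebra.coeff_single, Finsupp.single_apply]
    · rw [if_neg (fun h => hg (hiff.1 h))]
      simp [MonoidAlgebra.coeff_single, Finsupp.single_apply, Ne.symm hg, hg]
  have ha : a = ∑ g ∈ a.coeff.support, MonoidAlgebra.single g (a.coeff g) := by
    have := MonoidAlgebra.sum_coeff_single a
    rw [Finsupp.sum] at this
    exact this.symm
  conv_lhs => rw [ha]
  rw [map_sum]
  simp only [Finset.sum_apply]
  rw [integral_finset_sum _ (fun g _ => hint g (a.coeff g)),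
    Finset.sum_congr rfl (fun g _ => hval g (a.coeff g))]
  simp only [MonoidAlgebra.coeff_single]
  rw [← Finset.sum_apply', ← Finsupp.sum, Finsupp.sum_single]
end

section
/- The ℂ-algebra of diagonal periodic operators — equivalently, the ℂ-algebra (under pointwise operations) of all functions d : ℤ → ℂ that are 2^n-periodic for some n ≥ 0 — is isomorphic as a ℂ-algebra to the group algebra ℂ[ℤ(2^∞)] of the Prüfer 2-group ℤ(2^∞), where ℤ(2^∞) is the subgroup {q ∈ ℚ/ℤ : 2^n·q = 0 for some n ≥ 0} of ℚ/ℤ. -/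
open Filter Topology

/-- The group `ℚ/ℤ`. -/
abbrev QmodZ : Type := ℚ ⧸ AddSubgroup.zmultiples (1 : ℚ)

/-- The Prüfer 2-group `ℤ(2^∞) = {q ∈ ℚ/ℤ : 2^n·q = 0 for some n ≥ 0}`, as a
subgroup of `ℚ/ℤ`. -/
def Prufer2 : AddSubgroup QmodZ where
  carrier := {q | ∃ n : ℕ, ((2 : ℤ) ^ n) • q = 0}
  zero_mem' := ⟨0, smul_zero _⟩
  add_mem' := by
    rintro a b ⟨n, hn⟩ ⟨m, hm⟩
    refine ⟨n + m, ?_⟩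
    have h1 : ((2 : ℤ) ^ (n + m)) • a = 0 := by
      rw [show ((2 : ℤ) ^ (n + m)) = 2 ^ m * 2 ^ n by ring, mul_smul, hn, smul_zero]
    have h2 : ((2 : ℤ) ^ (n + m)) • b = 0 := by
      rw [show ((2 : ℤ) ^ (n + m)) = 2 ^ n * 2 ^ m by ring, mul_smul, hm, smul_zero]
    rw [smul_add, h1, h2, add_zero]
  neg_mem' := by
    rintro a ⟨n, hn⟩
    exact ⟨n, by rw [smul_neg, hn, neg_zero]⟩

noncomputable section Stmt7Aux

/-- the unit `e^{2πir}` -/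
def phiu (r : ℚ) : ℂˣ :=
  Units.mk0 (Complex.exp ((r : ℂ) * (2 * Real.pi * Complex.I))) (Complex.exp_ne_zero _)

lemma phiu_mul (r s : ℚ) : phiu (r + s) = phiu r * phiu s := by
  ext
  simp only [phiu, Units.val_mk0, Units.val_mul, ← Complex.exp_add]
  congr 1
  push_cast
  ring

lemma phiu_zero : phiu 0 = 1 := by
  ext; simp [phiu]

def phi : ℚ →+ Additive ℂˣ where
  toFun r := Additive.ofMul (phiu r)
  map_zero' := by simp [phiu_zero]
  map_add' r s := by simp [phiu_mul]

lemma phi_int (z : ℤ) : phi ((z : ℚ)) = 0 := by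
  show Additive.ofMul (phiu (z : ℚ)) = 0
  have : phiu ((z : ℚ)) = 1 := by
    ext
    simp only [phiu, Units.val_mk0, Units.val_one]
    rw [show (((z : ℚ) : ℚ) : ℂ) = (z : ℂ) by push_cast; ring]
    exact Complex.exp_int_mul_two_pi_mul_I z
  simp [this]

def psi : QmodZ →+ Additive ℂˣ :=
  QuotientAddGroup.lift _ phi (by rintro x ⟨z, rfl⟩; simpa using phi_int z)

lemma psi_injective : Function.Injective psi := by
  rw [injective_iff_map_eq_zero]
  intro q hq
  induction q using QuotientAddGroup.induction_on with
  | H r =>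
    have hr : phiu r = 1 := by
      have : Additive.ofMul (phiu r) = 0 := hq
      simpa using congrArg Additive.toMul this
    have hval : Complex.exp ((r : ℂ) * (2 * Real.pi * Complex.I)) = Complex.exp 0 := by
      have := congrArg Units.val hr
      simpa [phiu, Complex.exp_zero] using this
    obtain ⟨m, hm⟩ := Complex.exp_eq_exp_iff_exists_int.1 hval
    rw [zero_add] at hm
    have h2 : (r : ℂ) = (m : ℂ) :=
      mul_right_cancel₀ Complex.two_pi_I_ne_zero hm
    have h3 : r = (m : ℚ) := by exact_mod_cast h2
    rw [QuotientAddGroup.eq_zero_iff]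
    exact ⟨m, by simp [h3]⟩

def zeta (q : Prufer2) : ℂˣ := Additive.toMul (psi (q : QmodZ))

lemma zeta_injective : Function.Injective zeta := by
  intro a b h
  exact Subtype.ext (psi_injective (Additive.toMul.injective h))

lemma zeta_add (a b : Prufer2) : zeta (a + b) = zeta a * zeta b := by
  simp only [zeta, AddSubgroup.coe_add, map_add]
  rfl

lemma zeta_zero : zeta 0 = 1 := by
  simp only [zeta, AddSubgroup.coe_zero, map_zero]
  rfl

lemma zeta_zpow (q : Prufer2) (m : ℤ) (h : m • (q : QmodZ) = 0) : zeta q ^ m = 1 := by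
  have h2 : psi (m • (q : QmodZ)) = m • psi (q : QmodZ) := map_zsmul psi m _
  rw [h, map_zero] at h2
  have h3 := congrArg Additive.toMul h2
  rw [toMul_zsmul] at h3
  exact h3.symm

/-- the character `x ↦ e^{2πiqx}` on `ℤ` attached to `q`. -/
def vfun (q : Prufer2) : ℤ → ℂ := fun x => ((zeta q ^ x : ℂˣ) : ℂ)

def gmul : Multiplicative Prufer2 →* (ℤ → ℂ) where
  toFun q := vfun q.toAdd
  map_one' := funext fun x => by
    simp [vfun, zeta_zero]
  map_mul' a b := funext fun x => by
    simp only [vfun, toAdd_mul, zeta_add, mul_zpow, Units.val_mul, Pi.mul_apply]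

def Hmon (q : Prufer2) : Multiplicative ℤ →* ℂ :=
  (Units.coeHom ℂ).comp (zpowersHom ℂˣ (zeta q))

lemma Hmon_injective : Function.Injective Hmon := by
  intro a b h
  apply zeta_injective
  have h1 := DFunLike.congr_fun h (Multiplicative.ofAdd (1 : ℤ))
  have h2 : ((zeta a ^ (1:ℤ) : ℂˣ) : ℂ) = ((zeta b ^ (1:ℤ) : ℂˣ) : ℂ) := h1
  rw [zpow_one, zpow_one] at h2
  exact Units.ext h2

lemma li_v : LinearIndependent ℂ vfun := by
  have h := (linearIndependent_monoidHom (Multiplicative ℤ) ℂ).comp Hmon Hmon_injective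
  have e : vfun = fun q => ⇑(Hmon q) := rfl
  rw [e]
  exact h

def F : AddMonoidAlgebra ℂ Prufer2 →ₐ[ℂ] (ℤ → ℂ) :=
  AddMonoidAlgebra.lift ℂ (ℤ → ℂ) Prufer2 gmul

lemma F_eq : ⇑F = ⇑(Finsupp.linearCombination ℂ vfun) ∘ AddMonoidAlgebra.coeff := by
  funext f
  rw [show F f = _ from AddMonoidAlgebra.lift_apply gmul f, Function.comp_apply,
    Finsupp.linearCombination_apply]
  rfl

lemma F_injective : Function.Injective ⇑F := by
  rw [F_eq]; exact Function.Injective.comp li_v AddMonoidAlgebra.coeff_injective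

lemma range_F : Set.range ⇑F = ↑(Submodule.span ℂ (Set.range vfun)) := by
  rw [F_eq, Function.Surjective.range_comp (fun x => ⟨AddMonoidAlgebra.ofCoeff x, rfl⟩)]
  ext d
  rw [← Finsupp.range_linearCombination]
  simp only [SetLike.mem_coe, LinearMap.mem_range, Set.mem_range]

lemma per_of_per {d : ℤ → ℂ} {n m : ℕ} (h : ∀ x : ℤ, d (x + 2 ^ n) = d x) (hnm : n ≤ m) :
    ∀ x : ℤ, d (x + 2 ^ m) = d x := by
  have hp : Function.Periodic d ((2 : ℤ) ^ n) := h
  have h2 := hp.nat_mul (2 ^ (m - n))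
  intro x
  have e : ((2 ^ (m - n) : ℕ) : ℤ) * (2 : ℤ) ^ n = 2 ^ m := by
    push_cast
    rw [← pow_add]
    congr 1
    omega
  have := h2 x
  rwa [e] at this

lemma per_eq_of_dvd {d : ℤ → ℂ} {n : ℕ} (h : ∀ x : ℤ, d (x + 2 ^ n) = d x)
    {x y : ℤ} (hxy : ((2 : ℤ) ^ n) ∣ (y - x)) : d y = d x := by
  have hp : Function.Periodic d ((2 : ℤ) ^ n) := h
  obtain ⟨k, hk⟩ := hxy
  have h2 := (hp.int_mul k) x
  push_cast at h2
  rw [show x + k * (2 : ℤ) ^ n = y by linarith] at h2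
  exact h2

/-- the set of all eventually 2-power-periodic functions, as a submodule. -/
def SM : Submodule ℂ (ℤ → ℂ) where
  carrier := {d : ℤ → ℂ | ∃ n : ℕ, ∀ x : ℤ, d (x + 2 ^ n) = d x}
  zero_mem' := ⟨0, fun _ => rfl⟩
  add_mem' := by
    rintro a b ⟨n, hn⟩ ⟨m, hm⟩
    exact ⟨max n m, fun x => by
      simp only [Pi.add_apply, per_of_per hn (le_max_left n m) x,
        per_of_per hm (le_max_right n m) x]⟩
  smul_mem' := by
    rintro c a ⟨n, hn⟩
    exact ⟨n, fun x => by simp only [Pi.smul_apply, hn x]⟩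

lemma vfun_mem_SM (q : Prufer2) : vfun q ∈ SM := by
  obtain ⟨n, hn⟩ := q.2
  refine ⟨n, fun x => ?_⟩
  have h1 : zeta q ^ ((2 : ℤ) ^ n) = 1 := zeta_zpow q _ hn
  show ((zeta q ^ (x + 2 ^ n) : ℂˣ) : ℂ) = ((zeta q ^ x : ℂˣ) : ℂ)
  rw [zpow_add, h1, mul_one]

/-- the `2^n`-periodic functions. -/
def SMn (n : ℕ) : Submodule ℂ (ℤ → ℂ) where
  carrier := {d : ℤ → ℂ | ∀ x : ℤ, d (x + 2 ^ n) = d x}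
  zero_mem' := fun _ => rfl
  add_mem' := fun ha hb x => by simp only [Pi.add_apply, ha x, hb x]
  smul_mem' := fun c a ha x => by simp only [Pi.smul_apply, ha x]

def restr (n : ℕ) : SMn n →ₗ[ℂ] (ZMod (2 ^ n) → ℂ) where
  toFun f := fun z => f.1 (z.val : ℤ)
  map_add' f g := rfl
  map_smul' c f := rfl

lemma cast_pow_eq_zero (n : ℕ) : (((2 : ℤ) ^ n : ℤ) : ZMod (2 ^ n)) = 0 := by
  rw [show ((2 : ℤ) ^ n) = ((2 ^ n : ℕ) : ℤ) by push_cast; ring]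
  rw [Int.cast_natCast, ZMod.natCast_self]

def ext' (n : ℕ) : (ZMod (2 ^ n) → ℂ) →ₗ[ℂ] SMn n where
  toFun v := ⟨fun x => v ((x : ℤ) : ZMod (2 ^ n)), fun x => by
    simp only
    congr 1
    rw [Int.cast_add, cast_pow_eq_zero n, add_zero]⟩
  map_add' f g := rfl
  map_smul' c f := rfl

def equivZ (n : ℕ) : (SMn n) ≃ₗ[ℂ] (ZMod (2 ^ n) → ℂ) := by
  haveI : NeZero (2 ^ n : ℕ) := ⟨pow_ne_zero n two_ne_zero⟩
  refine LinearEquiv.ofLinear (restr n) (ext' n) ?_ ?_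
  · refine LinearMap.ext fun v => funext fun z => ?_
    show v (((z.val : ℤ) : ZMod (2 ^ n))) = v z
    congr 1
    rw [Int.cast_natCast]
    exact ZMod.natCast_rightInverse z
  · refine LinearMap.ext fun f => Subtype.ext (funext fun x => ?_)
    show (f : ℤ → ℂ) ((((x : ZMod (2 ^ n)).val : ℤ))) = (f : ℤ → ℂ) x
    refine per_eq_of_dvd f.2 ?_
    have h0 : (((((x : ZMod (2 ^ n)).val : ℤ) - x : ℤ)) : ZMod (2 ^ n)) = 0 := by
      rw [Int.cast_sub, Int.cast_natCast,
        show (((x : ZMod (2 ^ n)).val : ℕ) : ZMod (2 ^ n)) = (x : ZMod (2 ^ n)) from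
          ZMod.natCast_rightInverse _, sub_self]
    have h1 := (ZMod.intCast_zmod_eq_zero_iff_dvd _ (2 ^ n)).1 h0
    rw [show ((2 ^ n : ℕ) : ℤ) = (2 : ℤ) ^ n by push_cast; ring] at h1
    exact h1

lemma finrank_SMn (n : ℕ) : Module.finrank ℂ (SMn n) = 2 ^ n := by
  haveI : NeZero (2 ^ n : ℕ) := ⟨pow_ne_zero n two_ne_zero⟩
  rw [(equivZ n).finrank_eq, Module.finrank_pi, ZMod.card]

lemma qk_spec (n : ℕ) (k : Fin (2 ^ n)) :
    ((2 : ℤ) ^ n) • (QuotientAddGroup.mk ((k : ℚ) / 2 ^ n) : QmodZ) = 0 := by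
  have hmk : ((2 : ℤ) ^ n) • (QuotientAddGroup.mk ((k : ℚ) / 2 ^ n) : QmodZ)
      = QuotientAddGroup.mk (((2 : ℤ) ^ n) • ((k : ℚ) / 2 ^ n)) :=
    (map_zsmul (QuotientAddGroup.mk' (AddSubgroup.zmultiples (1 : ℚ))) _ _).symm
  rw [hmk, QuotientAddGroup.eq_zero_iff]
  have he : ((2 : ℤ) ^ n) • ((k : ℚ) / 2 ^ n) = ((k : ℤ) : ℚ) := by
    rw [zsmul_eq_mul]
    have h2 : (2 : ℚ) ^ n ≠ 0 := by positivity
    push_cast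
    field_simp
  rw [he]
  exact ⟨(k : ℤ), by simp⟩

def qk (n : ℕ) (k : Fin (2 ^ n)) : Prufer2 :=
  ⟨QuotientAddGroup.mk ((k : ℚ) / 2 ^ n), ⟨n, qk_spec n k⟩⟩

lemma qk_inj (n : ℕ) : Function.Injective (qk n) := by
  intro k k' h
  have h2 : (QuotientAddGroup.mk ((k : ℚ) / 2 ^ n) : QmodZ)
      = QuotientAddGroup.mk ((k' : ℚ) / 2 ^ n) := congrArg Subtype.val h
  rw [QuotientAddGroup.eq] at h2
  obtain ⟨z, hz⟩ := h2
  have h2n : (2 : ℚ) ^ n ≠ 0 := by positivity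
  have hz' : (z : ℚ) = -((k : ℚ) / 2 ^ n) + (k' : ℚ) / 2 ^ n := by
    rw [← hz]; simp
  have hq : ((k' : ℚ)) - (k : ℚ) = (z : ℚ) * 2 ^ n := by
    field_simp at hz'
    refine (mul_right_cancel₀ h2n ?_).symm
    ring_nf
    ring_nf at hz'
    linear_combination (2 : ℚ) ^ n * hz'
  have hZ : ((k' : ℕ) : ℤ) - ((k : ℕ) : ℤ) = z * 2 ^ n := by exact_mod_cast hq
  have hKpos : (0 : ℤ) < 2 ^ n := by positivity
  have hb1 : ((k' : ℕ) : ℤ) - ((k : ℕ) : ℤ) < 2 ^ n := by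
    have := k'.isLt
    have : ((k' : ℕ) : ℤ) < 2 ^ n := by exact_mod_cast this
    omega
  have hb2 : -(2 ^ n : ℤ) < ((k' : ℕ) : ℤ) - ((k : ℕ) : ℤ) := by
    have := k.isLt
    have : ((k : ℕ) : ℤ) < 2 ^ n := by exact_mod_cast this
    omega
  have hz0 : z = 0 := by
    have habs : |z * (2 : ℤ) ^ n| < 2 ^ n := by
      rw [← hZ]
      exact abs_lt.2 ⟨hb2, hb1⟩
    rw [abs_mul, show |(2 : ℤ) ^ n| = 2 ^ n from abs_of_pos hKpos] at habs
    have : |z| < 1 := by nlinarith [abs_nonneg z]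
    exact Int.abs_lt_one_iff.mp this
  rw [hz0] at hZ
  simp only [zero_mul] at hZ
  have : (k : ℕ) = (k' : ℕ) := by omega
  exact Fin.ext this

lemma SMn_le_span (n : ℕ) : SMn n ≤ Submodule.span ℂ (Set.range vfun) := by
  haveI : NeZero (2 ^ n : ℕ) := ⟨pow_ne_zero n two_ne_zero⟩
  haveI : FiniteDimensional ℂ (SMn n) := (equivZ n).symm.finiteDimensional
  have hmem : ∀ k : Fin (2 ^ n), vfun (qk n k) ∈ SMn n := by
    intro k x
    have h1 : zeta (qk n k) ^ ((2 : ℤ) ^ n) = 1 := zeta_zpow _ _ (qk_spec n k)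
    show ((zeta (qk n k) ^ (x + 2 ^ n) : ℂˣ) : ℂ) = ((zeta (qk n k) ^ x : ℂˣ) : ℂ)
    rw [zpow_add, h1, mul_one]
  set b : Fin (2 ^ n) → SMn n := fun k => ⟨vfun (qk n k), hmem k⟩ with hb_def
  have hli : LinearIndependent ℂ b := by
    have h1 : LinearIndependent ℂ (vfun ∘ qk n) := li_v.comp (qk n) (qk_inj n)
    exact LinearIndependent.of_comp (SMn n).subtype h1
  have hspan : Submodule.span ℂ (Set.range b) = ⊤ :=
    hli.span_eq_top_of_card_eq_finrank' (by simp [finrank_SMn n])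
  intro d hd
  have h1 : (⟨d, hd⟩ : SMn n) ∈ Submodule.span ℂ (Set.range b) := by
    rw [hspan]; trivial
  have h2 := Submodule.mem_map_of_mem (f := (SMn n).subtype) h1
  rw [Submodule.map_span] at h2
  have h3 : (SMn n).subtype '' Set.range b ⊆ Set.range vfun := by
    rintro _ ⟨_, ⟨k, rfl⟩, rfl⟩
    exact ⟨qk n k, rfl⟩
  exact Submodule.span_mono h3 h2

end Stmt7Aux

/-- the ℂ-algebra (under pointwise operations) of all functions
`d : ℤ → ℂ` that are `2^n`-periodic for some `n ≥ 0` is isomorphic as a ℂ-algebra to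
the group algebra `ℂ[ℤ(2^∞)]` of the Prüfer 2-group: there is an injective ℂ-algebra
homomorphism from `ℂ[ℤ(2^∞)]` to the algebra of functions `ℤ → ℂ` whose range is
exactly the set of eventually-`2^n`-periodic functions. -/
theorem stmt7 :
    ∃ F : AddMonoidAlgebra ℂ Prufer2 →ₐ[ℂ] (ℤ → ℂ),
      Function.Injective F ∧
      Set.range F = {d : ℤ → ℂ | ∃ n : ℕ, ∀ x : ℤ, d (x + 2 ^ n) = d x} := by
  refine ⟨F, F_injective, ?_⟩
  rw [range_F]
  apply subset_antisymm
  · have h1 : Submodule.span ℂ (Set.range vfun) ≤ SM :=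
      Submodule.span_le.2 (by rintro _ ⟨q, rfl⟩; exact vfun_mem_SM q)
    exact fun d hd => h1 hd
  · rintro d ⟨n, hn⟩
    exact SMn_le_span n hn
end

section
/- Let A be a periodic operator and k ≥ 1 be such that A(x+2^k, y+2^k) = A(x,y) for all x,y and A(x,y) = 0 whenever |x−y| ≥ 2^k. Then for all integers k < n ≤ m, the rank over ℂ of the 2^m × 2^m matrix D^n_m(A_n) − A_m is at most 2^{k+1}·2^{m−n}. Consequently the sequence of matrices {A_n} is Cauchy with respect to the normalized rank pseudometric d(B,C) = rank(B−C)/size. -/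
open Filter Topology

/-- A *periodic operator* is a function `A : ℤ × ℤ → ℂ` such that for some `n ≥ 1`,
`A(x,y) = 0` whenever `|x−y| > 2^n` and `A(x+2^n, y+2^n) = A(x,y)` for all `x, y ∈ ℤ`. -/
def IsPeriodicOp (A : ℤ → ℤ → ℂ) : Prop :=
  ∃ n : ℕ, 1 ≤ n ∧ (∀ x y : ℤ, |x - y| > 2 ^ n → A x y = 0) ∧
    (∀ x y : ℤ, A (x + 2 ^ n) (y + 2 ^ n) = A x y)

/-- The truncation `A_n`, viewed as the `2^n × 2^n` matrix `(A(x,y))_{0 ≤ x,y ≤ 2^n−1}`. -/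
noncomputable def trunc (A : ℤ → ℤ → ℂ) (n : ℕ) : Matrix (Fin (2 ^ n)) (Fin (2 ^ n)) ℂ :=
  fun i j => A ((i : ℕ) : ℤ) ((j : ℕ) : ℤ)

/-- The block-diagonal embedding `D^n_m : Mat_{2^n}(ℂ) → Mat_{2^m}(ℂ)` placing `2^{m−n}`
copies of its argument along the diagonal. -/
def blockEmbed (n m : ℕ) (B : Matrix (Fin (2 ^ n)) (Fin (2 ^ n)) ℂ) :
    Matrix (Fin (2 ^ m)) (Fin (2 ^ m)) ℂ :=
  fun i j =>
    if (i : ℕ) / 2 ^ n = (j : ℕ) / 2 ^ n then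
      B ⟨(i : ℕ) % 2 ^ n, Nat.mod_lt _ (by positivity)⟩
        ⟨(j : ℕ) % 2 ^ n, Nat.mod_lt _ (by positivity)⟩
    else 0

/-- if `A` is a periodic operator with `A(x+2^k,y+2^k) = A(x,y)` and
`A(x,y) = 0` for `|x−y| ≥ 2^k`, then for `k < n ≤ m` the rank of `D^n_m(A_n) − A_m` is
at most `2^{k+1}·2^{m−n}`; consequently `{A_n}` is Cauchy for the normalized rank
pseudometric. -/
theorem stmt9 (A : ℤ → ℤ → ℂ) (hA : IsPeriodicOp A) (k : ℕ) (hk : 1 ≤ k)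
    (hper : ∀ x y : ℤ, A (x + 2 ^ k) (y + 2 ^ k) = A x y)
    (hsupp : ∀ x y : ℤ, (2 : ℤ) ^ k ≤ |x - y| → A x y = 0) :
    (∀ n m : ℕ, k < n → n ≤ m →
      Matrix.rank (blockEmbed n m (trunc A n) - trunc A m) ≤ 2 ^ (k + 1) * 2 ^ (m - n)) ∧
    (∀ ε : ℝ, 0 < ε → ∃ N : ℕ, ∀ n m : ℕ, N ≤ n → n ≤ m →
      (Matrix.rank (blockEmbed n m (trunc A n) - trunc A m) : ℝ) / 2 ^ m < ε) := by
  classical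
  -- iterated periodicity
  have hperm : ∀ (t : ℕ) (x y : ℤ), A (x + t * 2 ^ k) (y + t * 2 ^ k) = A x y := by
    intro t
    induction t with
    | zero => simp
    | succ t ih =>
      intro x y
      have : ∀ z : ℤ, z + (t + 1 : ℕ) * 2 ^ k = (z + t * 2 ^ k) + 2 ^ k := by
        intro z; push_cast; ring
      rw [this x, this y, hper, ih]
  have main : ∀ n m : ℕ, k < n → n ≤ m →
      Matrix.rank (blockEmbed n m (trunc A n) - trunc A m) ≤ 2 ^ (k + 1) * 2 ^ (m - n) := by
    intro n m hkn hnm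
    set M := blockEmbed n m (trunc A n) - trunc A m with hM
    have hkn' : (2 : ℕ) ^ k ≤ 2 ^ n := Nat.pow_le_pow_right (by norm_num) hkn.le
    have h2k2 : (2 : ℕ) ^ k + 2 ^ k = 2 ^ (k + 1) := by rw [pow_succ]; omega
    have hnm' : (2 : ℕ) ^ m = 2 ^ n * 2 ^ (m - n) := by
      rw [← pow_add]; congr 1; omega
    set P : Fin (2 ^ m) → Prop :=
      fun i => (i : ℕ) % 2 ^ n < 2 ^ k ∨ 2 ^ n - 2 ^ k ≤ (i : ℕ) % 2 ^ n with hP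
    -- rows outside P are zero
    have hrow : ∀ i : Fin (2 ^ m), ¬ P i → ∀ j, M i j = 0 := by
      intro i hi j
      simp only [hP, not_or, not_lt, not_le] at hi
      obtain ⟨hr1, hr2⟩ := hi
      have hrlt : (i : ℕ) % 2 ^ n < 2 ^ n := Nat.mod_lt _ (by positivity)
      have hslt : (j : ℕ) % 2 ^ n < 2 ^ n := Nat.mod_lt _ (by positivity)
      have hieq : (i : ℕ) = 2 ^ n * ((i : ℕ) / 2 ^ n) + (i : ℕ) % 2 ^ n :=
        (Nat.div_add_mod _ _).symm
      have hjeq : (j : ℕ) = 2 ^ n * ((j : ℕ) / 2 ^ n) + (j : ℕ) % 2 ^ n :=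
        (Nat.div_add_mod _ _).symm
      simp only [hM, Matrix.sub_apply, blockEmbed, trunc]
      by_cases hb : (i : ℕ) / 2 ^ n = (j : ℕ) / 2 ^ n
      · rw [if_pos hb]
        have hnk : (2 : ℕ) ^ (n - k) * 2 ^ k = 2 ^ n := by
          rw [← pow_add]; congr 1; omega
        have hxiN : (i : ℕ) % 2 ^ n + ((i : ℕ) / 2 ^ n * 2 ^ (n - k)) * 2 ^ k = (i : ℕ) := by
          rw [mul_assoc, hnk]; exact Nat.mod_add_div' _ _
        have hxjN : (j : ℕ) % 2 ^ n + ((i : ℕ) / 2 ^ n * 2 ^ (n - k)) * 2 ^ k = (j : ℕ) := by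
          rw [mul_assoc, hnk, hb]; exact Nat.mod_add_div' _ _
        have hxi : (((i : ℕ) % 2 ^ n : ℕ) : ℤ) +
            (((i : ℕ) / 2 ^ n * 2 ^ (n - k) : ℕ) : ℤ) * 2 ^ k = ((i : ℕ) : ℤ) := by
          exact_mod_cast hxiN
        have hxj : (((j : ℕ) % 2 ^ n : ℕ) : ℤ) +
            (((i : ℕ) / 2 ^ n * 2 ^ (n - k) : ℕ) : ℤ) * 2 ^ k = ((j : ℕ) : ℤ) := by
          exact_mod_cast hxjN
        have hAeq := hperm ((i : ℕ) / 2 ^ n * 2 ^ (n - k))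
          (((i : ℕ) % 2 ^ n : ℕ) : ℤ) (((j : ℕ) % 2 ^ n : ℕ) : ℤ)
        rw [hxi, hxj] at hAeq
        simp [hAeq]
      · rw [if_neg hb]
        have hz : A ((i : ℕ) : ℤ) ((j : ℕ) : ℤ) = 0 := by
          apply hsupp
          set qi : ℤ := (((i : ℕ) / 2 ^ n : ℕ) : ℤ) with hqi
          set qj : ℤ := (((j : ℕ) / 2 ^ n : ℕ) : ℤ) with hqj
          set r : ℤ := (((i : ℕ) % 2 ^ n : ℕ) : ℤ) with hr
          set s : ℤ := (((j : ℕ) % 2 ^ n : ℕ) : ℤ) with hs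
          have ei : ((i : ℕ) : ℤ) = 2 ^ n * qi + r := by
            rw [hqi, hr]; exact_mod_cast congrArg (Nat.cast : ℕ → ℤ) hieq
          have ej : ((j : ℕ) : ℤ) = 2 ^ n * qj + s := by
            rw [hqj, hs]; exact_mod_cast congrArg (Nat.cast : ℕ → ℤ) hjeq
          have hr1' : (2 : ℤ) ^ k ≤ r := by rw [hr]; exact_mod_cast hr1
          have hrkN : (i : ℕ) % 2 ^ n + 2 ^ k ≤ 2 ^ n := by omega
          have hrk : r + 2 ^ k ≤ 2 ^ n := by rw [hr]; exact_mod_cast hrkN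
          have hs0 : (0 : ℤ) ≤ s := by rw [hs]; positivity
          have hs1 : s < 2 ^ n := by rw [hs]; exact_mod_cast hslt
          have hqne : qi ≠ qj := by
            rw [hqi, hqj]; intro h; exact hb (by exact_mod_cast h)
          have h2k0 : (0 : ℤ) < 2 ^ k := by positivity
          rcases lt_or_gt_of_ne hqne with h | h
          · have h2 : (2 : ℤ) ^ n ≤ 2 ^ n * qj - 2 ^ n * qi := by
              have := le_mul_of_one_le_right (a := (2:ℤ)^n) (b := qj - qi)
                (by positivity) (by omega)
              linarith only [this]
            have hji : (2 : ℤ) ^ k ≤ ((j : ℕ) : ℤ) - ((i : ℕ) : ℤ) := by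
              rw [ei, ej]; linarith only [h2, hrk, hs0]
            rw [abs_sub_comm, abs_of_nonneg (by linarith only [hji, h2k0])]
            exact hji
          · have h2 : (2 : ℤ) ^ n ≤ 2 ^ n * qi - 2 ^ n * qj := by
              have := le_mul_of_one_le_right (a := (2:ℤ)^n) (b := qi - qj)
                (by positivity) (by omega)
              linarith only [this]
            have hij : (2 : ℤ) ^ k ≤ ((i : ℕ) : ℤ) - ((j : ℕ) : ℤ) := by
              rw [ei, ej]; linarith only [h2, hr1', hs1]
            rw [abs_of_nonneg (by linarith only [hij, h2k0])]
            exact hij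
        simp [hz]
    -- M = D * M with D diagonal 0/1
    set w : Fin (2 ^ m) → ℂ := fun i => if P i then 1 else 0 with hw
    have hDM : Matrix.diagonal w * M = M := by
      ext i j
      rw [Matrix.diagonal_mul]
      by_cases hi : P i
      · simp only [hw, if_pos hi, one_mul]
      · rw [hrow i hi j, mul_zero]
    have hrank : M.rank ≤ (Matrix.diagonal w).rank := by
      conv_lhs => rw [← hDM]
      exact Matrix.rank_mul_le_left _ _
    rw [Matrix.rank_diagonal] at hrank
    -- count the nonzero diagonal entries
    have hcardeq : Fintype.card {i // w i ≠ 0} = Fintype.card {i // P i} := by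
      apply Fintype.card_congr
      apply Equiv.subtypeEquivRight
      intro i
      simp only [hw]
      split
      case _ h => exact iff_of_true one_ne_zero h
      case _ h => exact iff_of_false (by simp) h
    -- injection into Fin (2^(m-n)) × Fin (2^(k+1))
    have hinj : Fintype.card {i // P i} ≤ 2 ^ (m - n) * 2 ^ (k + 1) := by
      have := Fintype.card_le_of_injective
        (fun x : {i // P i} =>
          ((⟨(x.1 : ℕ) / 2 ^ n, by
              exact Nat.div_lt_of_lt_mul (lt_of_lt_of_le x.1.2 (le_of_eq hnm'))⟩ : Fin (2 ^ (m - n))),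
           (⟨if (x.1 : ℕ) % 2 ^ n < 2 ^ k then (x.1 : ℕ) % 2 ^ n
             else (x.1 : ℕ) % 2 ^ n - (2 ^ n - 2 ^ k) + 2 ^ k, by
              have hx := x.2
              have hlt : (x.1 : ℕ) % 2 ^ n < 2 ^ n := Nat.mod_lt _ (by positivity)
              simp only [hP] at hx
              split <;> omega⟩ : Fin (2 ^ (k + 1)))))
        ?_
      · simpa [Fintype.card_prod] using this
      · rintro ⟨i, hi⟩ ⟨i', hi'⟩ heq
        simp only [Prod.mk.injEq, Fin.mk.injEq] at heq
        obtain ⟨h1, h2⟩ := heq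
        simp only [hP] at hi hi'
        have hlt : (i : ℕ) % 2 ^ n < 2 ^ n := Nat.mod_lt _ (by positivity)
        have hlt' : (i' : ℕ) % 2 ^ n < 2 ^ n := Nat.mod_lt _ (by positivity)
        have hmod : (i : ℕ) % 2 ^ n = (i' : ℕ) % 2 ^ n := by
          split_ifs at h2 <;> omega
        have : (i : ℕ) = (i' : ℕ) := by
          have e1 := Nat.div_add_mod (i : ℕ) (2 ^ n)
          have e2 := Nat.div_add_mod (i' : ℕ) (2 ^ n)
          rw [h1, hmod] at e1
          omega
        exact Subtype.ext (Fin.ext this)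
    calc M.rank ≤ Fintype.card {i // P i} := by rw [hcardeq] at hrank; exact hrank
      _ ≤ 2 ^ (m - n) * 2 ^ (k + 1) := hinj
      _ = 2 ^ (k + 1) * 2 ^ (m - n) := Nat.mul_comm _ _
  refine ⟨main, ?_⟩
  intro ε hε
  obtain ⟨N0, hN0⟩ := pow_unbounded_of_one_lt (R := ℝ) (2 ^ (k + 1) / ε) (by norm_num : (1:ℝ) < 2)
  refine ⟨max N0 (k + 1), fun n m hn hnm => ?_⟩
  have hkn : k < n := lt_of_lt_of_le (Nat.lt_succ_self k) (le_trans (le_max_right _ _) hn)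
  have hb := main n m hkn hnm
  have h2m : (0 : ℝ) < 2 ^ m := by positivity
  have h2n : (0 : ℝ) < 2 ^ n := by positivity
  have hrle : (Matrix.rank (blockEmbed n m (trunc A n) - trunc A m) : ℝ) ≤
      2 ^ (k + 1) * 2 ^ (m - n) := by exact_mod_cast hb
  have hsplit : (2 : ℝ) ^ (m - n) = 2 ^ m / 2 ^ n := by
    rw [eq_div_iff (ne_of_gt h2n), ← pow_add]
    congr 1; omega
  have hstep : (Matrix.rank (blockEmbed n m (trunc A n) - trunc A m) : ℝ) / 2 ^ m ≤
      2 ^ (k + 1) / 2 ^ n := by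
    rw [div_le_div_iff₀ h2m h2n]
    calc (Matrix.rank (blockEmbed n m (trunc A n) - trunc A m) : ℝ) * 2 ^ n
        ≤ (2 ^ (k + 1) * 2 ^ (m - n)) * 2 ^ n := by nlinarith
      _ = 2 ^ (k + 1) * 2 ^ m := by rw [hsplit]; field_simp
  have hlast : (2 : ℝ) ^ (k + 1) / 2 ^ n < ε := by
    rw [div_lt_iff₀ h2n]
    have hN0n : (2 : ℝ) ^ N0 ≤ 2 ^ n :=
      pow_le_pow_right₀ (by norm_num) (le_trans (le_max_left _ _) hn)
    have : 2 ^ (k + 1) / ε < (2 : ℝ) ^ n := lt_of_lt_of_le hN0 hN0n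
    calc (2:ℝ) ^ (k+1) = (2 ^ (k+1) / ε) * ε := by field_simp
      _ < 2 ^ n * ε := by apply mul_lt_mul_of_pos_right this hε
      _ = ε * 2 ^ n := by ring
  exact lt_of_le_of_lt hstep hlast
end

section
/- Let A be a periodic operator and k ≥ 1 be such that A(x+2^k, y+2^k) = A(x,y) for all x,y and A(x,y) = 0 whenever |x−y| ≥ 2^k. If A ≠ 0, then for every n > k the rank over ℂ of the 2^n × 2^n matrix A_n is at least 2^{n−k} − 1. Consequently, for a periodic operator A one has lim_{n→∞} rank(A_n)/2^n = 0 if and only if A = 0. -/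
open Filter Topology

lemma hper_gen (A : ℤ → ℤ → ℂ) (k : ℕ)
    (hper : ∀ x y : ℤ, A (x + 2 ^ k) (y + 2 ^ k) = A x y) :
    ∀ m x y : ℤ, A (x + m * 2 ^ k) (y + m * 2 ^ k) = A x y := by
  intro m
  induction m using Int.induction_on with
  | zero => simp
  | succ i ih =>
    intro x y
    have := hper (x + i * 2 ^ k) (y + i * 2 ^ k)
    rw [ih] at this
    rw [← this]; ring_nf
  | pred i ih =>
    intro x y
    have h2 := hper (x + (-i - 1) * 2 ^ k) (y + (-i - 1) * 2 ^ k)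
    have : x + (-i - 1) * 2 ^ k + 2 ^ k = x + (-↑i) * 2 ^ k := by ring
    rw [this] at h2
    have : y + (-i - 1) * 2 ^ k + 2 ^ k = y + (-↑i) * 2 ^ k := by ring
    rw [this] at h2
    rw [ih] at h2
    exact h2.symm

lemma rank_bound (A : ℤ → ℤ → ℂ) (k : ℕ)
    (hper : ∀ x y : ℤ, A (x + 2 ^ k) (y + 2 ^ k) = A x y)
    (hsupp : ∀ x y : ℤ, (2 : ℤ) ^ k ≤ |x - y| → A x y = 0)
    (hA0 : A ≠ 0) : ∀ n : ℕ, k < n → 2 ^ (n - k) - 1 ≤ Matrix.rank (trunc A n) := by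
  have hper' := hper_gen A k hper
  -- find a nonzero entry
  have hex : ∃ x y : ℤ, A x y ≠ 0 := by
    by_contra h
    push_neg at h
    exact hA0 (by funext x y; exact h x y)
  obtain ⟨x, y, hxy⟩ := hex
  set P : ℤ := 2 ^ k with hP
  have hPpos : (0 : ℤ) < P := by positivity
  -- normalize x into [0, P)
  have hx0 : A (x % P) (y - x / P * P) ≠ 0 := by
    have := hper' (-(x / P)) x y
    have hx : x + -(x / P) * P = x % P := by rw [Int.emod_def]; ring
    have hy : y + -(x / P) * P = y - x / P * P := by ring
    rw [hx, hy] at this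
    rw [this]; exact hxy
  set x0 : ℤ := x % P with hx0def
  have hx0nonneg : 0 ≤ x0 := Int.emod_nonneg x (ne_of_gt hPpos)
  have hx0lt : x0 < P := Int.emod_lt_of_pos x hPpos
  -- greatest y0 with A x0 y0 ≠ 0
  obtain ⟨y0, hy0ne, hy0max⟩ := _root_.Int.exists_greatest_of_bdd
    (P := fun z => A x0 z ≠ 0)
    ⟨x0 + P, fun z hz => by
      by_contra hzz
      push_neg at hzz
      exact hz (hsupp x0 z (by rw [abs_sub_comm, abs_of_pos (by linarith)]; linarith))⟩
    ⟨_, hx0⟩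
  have habs : |x0 - y0| < P := by
    by_contra h
    push_neg at h
    exact hy0ne (hsupp x0 y0 h)
  have hy0lt : y0 < 2 * P := by
    rcases abs_lt.mp habs with ⟨h1, h2⟩; linarith
  have hy0gt : x0 - P < y0 := by
    rcases abs_lt.mp habs with ⟨h1, h2⟩; linarith
  -- zero above relation
  have hzero : ∀ j : ℤ, 1 ≤ j → A x0 (y0 + j * P) = 0 := by
    intro j hj
    by_contra h
    have := hy0max _ h
    nlinarith
  set τ : ℤ := if y0 < 0 then 1 else 0 with hτ
  have hb0nonneg : 0 ≤ y0 + τ * P := by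
    by_cases h : y0 < 0 <;> simp [hτ, h] <;> linarith
  have hb0lt : y0 + τ * P < 2 * P := by
    by_cases h : y0 < 0 <;> simp [hτ, h] <;> linarith
  set a : ℕ := x0.toNat with ha
  set b : ℕ := (y0 + τ * P).toNat with hb
  set t : ℕ := if y0 < 0 then 1 else 0 with ht
  have hat : (a : ℤ) = x0 := Int.toNat_of_nonneg hx0nonneg
  have hbt : (b : ℤ) = y0 + τ * P := Int.toNat_of_nonneg hb0nonneg
  have htt : (t : ℤ) = τ := by by_cases h : y0 < 0 <;> simp [ht, hτ, h]
  have haQ : a < 2 ^ k := by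
    have : (a : ℤ) < (2 : ℤ) ^ k := hat ▸ hx0lt
    exact_mod_cast this
  have hbQ : b < 2 * 2 ^ k := by
    have : (b : ℤ) < 2 * (2 : ℤ) ^ k := hbt ▸ hb0lt
    exact_mod_cast this
  have htQ : t ≤ 1 := by by_cases h : y0 < 0 <;> simp [ht, h]
  intro n hn
  set N : ℕ := 2 ^ (n - k) - 1 with hN
  have h2le : 2 ≤ 2 ^ (n - k) := by
    calc 2 = 2 ^ 1 := by norm_num
    _ ≤ 2 ^ (n - k) := Nat.pow_le_pow_right (by norm_num) (by omega)
  have hpowmul : 2 ^ (n - k) * 2 ^ k = 2 ^ n := by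
    rw [← pow_add]; congr 1; omega
  -- row/col index maps
  have hrb : ∀ l : Fin N, a + (t + l) * 2 ^ k < 2 ^ n := by
    intro l
    have hl : (l : ℕ) < N := l.isLt
    have h1 : t + (l : ℕ) + 1 ≤ 2 ^ (n - k) := by omega
    calc a + (t + l) * 2 ^ k < 2 ^ k + (t + l) * 2 ^ k := by omega
    _ = (t + l + 1) * 2 ^ k := by ring
    _ ≤ 2 ^ (n - k) * 2 ^ k := Nat.mul_le_mul_right _ h1
    _ = 2 ^ n := hpowmul
  have hcb : ∀ m : Fin N, b + m * 2 ^ k < 2 ^ n := by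
    intro m
    have hm : (m : ℕ) < N := m.isLt
    have h1 : (m : ℕ) + 2 ≤ 2 ^ (n - k) := by omega
    calc b + m * 2 ^ k < 2 * 2 ^ k + m * 2 ^ k := by omega
    _ = (m + 2) * 2 ^ k := by ring
    _ ≤ 2 ^ (n - k) * 2 ^ k := Nat.mul_le_mul_right _ h1
    _ = 2 ^ n := hpowmul
  set r : Fin N → Fin (2 ^ n) := fun l => ⟨a + (t + l) * 2 ^ k, hrb l⟩ with hr
  set c : Fin N → Fin (2 ^ n) := fun m => ⟨b + m * 2 ^ k, hcb m⟩ with hc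
  set B : Matrix (Fin N) (Fin N) ℂ := (trunc A n).submatrix r c with hB
  -- entry formula
  have hBentry : ∀ l m : Fin N, B l m = A x0 (y0 + ((m : ℤ) - (l : ℤ)) * P) := by
    intro l m
    have : B l m = A ((a + (t + l) * 2 ^ k : ℕ) : ℤ) ((b + m * 2 ^ k : ℕ) : ℤ) := rfl
    rw [this]
    push_cast [hat, hbt, htt]
    have h1 : x0 + (τ + (l : ℤ)) * (2:ℤ) ^ k = x0 + (τ + l) * P := by rw [hP]
    have h2 : y0 + τ * P + (m : ℤ) * (2:ℤ) ^ k
        = (y0 + ((m : ℤ) - (l : ℤ)) * P) + (τ + l) * P := by rw [hP]; ring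
    rw [h1, h2]
    exact hper' (τ + l) x0 (y0 + ((m : ℤ) - (l : ℤ)) * P)
  -- lower triangular
  have hBtri : B.BlockTriangular OrderDual.toDual := by
    intro i j hij
    have hij' : (i : ℕ) < (j : ℕ) := hij
    rw [hBentry]
    apply hzero
    have h3 : ((i : ℕ) : ℤ) < ((j : ℕ) : ℤ) := by exact_mod_cast hij'
    omega
  have hBdiag : ∀ l : Fin N, B l l = A x0 y0 := by
    intro l
    rw [hBentry]; simp
  -- determinant nonzero
  have hdet : B.det ≠ 0 := by
    rw [Matrix.det_of_lowerTriangular B hBtri]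
    apply Finset.prod_ne_zero_iff.mpr
    intro i _
    rw [hBdiag]
    exact hy0ne
  have hrankB : B.rank = N := by
    rw [Matrix.rank_of_isUnit B ((Matrix.isUnit_iff_isUnit_det B).mpr (isUnit_iff_ne_zero.mpr hdet))]
    simp
  -- B = F * trunc A n * E
  set F : Matrix (Fin N) (Fin (2 ^ n)) ℂ := fun l i => if i = r l then 1 else 0 with hF
  set E : Matrix (Fin (2 ^ n)) (Fin N) ℂ := fun j m => if j = c m then 1 else 0 with hE
  have hfac : B = F * (trunc A n * E) := by
    ext l m
    simp only [hB, Matrix.submatrix_apply, Matrix.mul_apply, hF, hE]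
    show trunc A n (r l) (c m) = ∑ j, F l j * ∑ j', trunc A n j j' * E j' m
    rw [Finset.sum_eq_single (r l) (fun j _ hj => by simp [hF, hj]) (by simp)]
    rw [Finset.sum_eq_single (c m) (fun j _ hj => by simp [hE, hj]) (by simp)]
    simp [hF, hE]
  have : B.rank ≤ (trunc A n).rank := by
    rw [hfac]
    calc (F * (trunc A n * E)).rank ≤ (trunc A n * E).rank := Matrix.rank_mul_le_right _ _
    _ ≤ (trunc A n).rank := Matrix.rank_mul_le_left _ _
  rw [hrankB] at this
  exact this

/-- if `A` is a periodic operator with `A(x+2^k,y+2^k) = A(x,y)` and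
`A(x,y) = 0` for `|x−y| ≥ 2^k`, and `A ≠ 0`, then for `n > k` the rank of `A_n` is at
least `2^{n−k} − 1`; consequently `lim_n rank(A_n)/2^n = 0` if and only if `A = 0`. -/
theorem stmt10 (A : ℤ → ℤ → ℂ) (hA : IsPeriodicOp A) (k : ℕ) (hk : 1 ≤ k)
    (hper : ∀ x y : ℤ, A (x + 2 ^ k) (y + 2 ^ k) = A x y)
    (hsupp : ∀ x y : ℤ, (2 : ℤ) ^ k ≤ |x - y| → A x y = 0) :
    (A ≠ 0 → ∀ n : ℕ, k < n → 2 ^ (n - k) - 1 ≤ Matrix.rank (trunc A n)) ∧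
    (Filter.Tendsto (fun n : ℕ => (Matrix.rank (trunc A n) : ℝ) / 2 ^ n)
        Filter.atTop (nhds 0) ↔ A = 0) := by

  constructor
  · intro hA0
    exact rank_bound A k hper hsupp hA0
  · constructor
    · intro htend
      by_contra hA0
      have hrk := rank_bound A k hper hsupp hA0
      set f : ℕ → ℝ := fun n => (Matrix.rank (trunc A n) : ℝ) / 2 ^ n with hf
      have key : ∀ n : ℕ, k < n → (1 : ℝ) / 2 ^ k - 1 / 2 ^ n ≤ f n := by
        intro n hn
        have h1 : (2 : ℕ) ^ (n - k) - 1 ≤ Matrix.rank (trunc A n) := hrk n hn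
        have h2 : ((2 : ℝ) ^ (n - k) - 1) ≤ (Matrix.rank (trunc A n) : ℝ) := by
          have h3 : (((2 : ℕ) ^ (n - k) - 1 : ℕ) : ℝ) ≤ (Matrix.rank (trunc A n) : ℝ) := by
            exact_mod_cast h1
          have h4 : (((2 : ℕ) ^ (n - k) - 1 : ℕ) : ℝ) = (2 : ℝ) ^ (n - k) - 1 := by
            rw [Nat.cast_sub (Nat.one_le_two_pow)]
            push_cast
            ring
          linarith [h4 ▸ h3]
        have hpow : (2 : ℝ) ^ (n - k) * 2 ^ k = 2 ^ n := by
          rw [← pow_add]; congr 1; omega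
        have h2n : (0 : ℝ) < 2 ^ n := by positivity
        have h2k : (0 : ℝ) < 2 ^ k := by positivity
        have h5 : ((2 : ℝ) ^ (n - k) - 1) / 2 ^ n = 1 / 2 ^ k - 1 / 2 ^ n := by
          field_simp
          nlinarith [hpow]
        rw [← h5]
        exact div_le_div_of_nonneg_right h2 (by positivity)
      have hlim : Filter.Tendsto (fun n : ℕ => (1 : ℝ) / 2 ^ k - 1 / 2 ^ n)
          Filter.atTop (nhds ((1 : ℝ) / 2 ^ k - 0)) := by
        apply Filter.Tendsto.sub tendsto_const_nhds
        have := tendsto_pow_atTop_nhds_zero_of_lt_one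
          (by norm_num : (0:ℝ) ≤ 1/2) (by norm_num : (1/2:ℝ) < 1)
        simpa [one_div, inv_pow] using this
      have hle := le_of_tendsto_of_tendsto hlim htend
        (Filter.eventually_atTop.mpr ⟨k + 1, fun n hn => key n (by omega)⟩)
      have : (0:ℝ) < 1 / 2 ^ k := by positivity
      linarith
    · intro h
      subst h
      have : ∀ n : ℕ, Matrix.rank (trunc (0 : ℤ → ℤ → ℂ) n) = 0 := by
        intro n
        have : trunc (0 : ℤ → ℤ → ℂ) n = 0 := by
          ext i j; rfl
        rw [this, Matrix.rank_zero]
      simp only [this, Nat.cast_zero, zero_div]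
      exact tendsto_const_nhds
end

section
/- For all periodic operators A and B, lim_{n→∞} rank((AB)_n − A_n·B_n)/2^n = 0, where (AB)_n is the truncation of the product periodic operator AB and A_n·B_n is the product of the 2^n × 2^n matrices A_n and B_n. -/
open Filter Topology

/-- The product `(AB)(x,y) = ∑_z A(x,z)·B(z,y)` (a finite sum for periodic operators). -/
noncomputable def opMul (A B : ℤ → ℤ → ℂ) : ℤ → ℤ → ℂ := fun x y => ∑ᶠ z : ℤ, A x z * B z y

/-- A matrix whose rows vanish off a finset `S` has rank at most `S.card`. -/
lemma rank_le_card_support {m : ℕ} (M : Matrix (Fin m) (Fin m) ℂ) (S : Finset (Fin m))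
    (h : ∀ i ∉ S, M i = 0) : M.rank ≤ S.card := by
  rw [← Matrix.rank_transpose, Matrix.rank_eq_finrank_span_cols]
  change Module.finrank ℂ (Submodule.span ℂ (Set.range M)) ≤ S.card
  have hle : Submodule.span ℂ (Set.range M) ≤ Submodule.span ℂ ((S.image M : Finset (Fin m → ℂ)) : Set (Fin m → ℂ)) := by
    rw [Submodule.span_le]
    rintro v ⟨i, rfl⟩
    by_cases hi : i ∈ S
    · refine Submodule.subset_span ?_
      simp only [Finset.coe_image, Set.mem_image, Finset.mem_coe]
      exact Finset.mem_coe.mpr (Finset.mem_image_of_mem M hi)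
    · rw [h i hi]; exact Submodule.zero_mem _
  calc Module.finrank ℂ (Submodule.span ℂ (Set.range M))
      ≤ Module.finrank ℂ (Submodule.span ℂ ((S.image M : Finset (Fin m → ℂ)) : Set (Fin m → ℂ))) :=
        Submodule.finrank_mono hle
    _ ≤ (S.image M).card := finrank_span_finset_le_card _
    _ ≤ S.card := Finset.card_image_le

lemma map_range_eq_Icc (n : ℕ) :
    (Finset.range n).map ⟨(Nat.cast : ℕ → ℤ), Nat.cast_injective⟩
      = Finset.Icc (0 : ℤ) ((n : ℤ) - 1) := by
  ext z
  simp only [Finset.mem_map, Finset.mem_range, Finset.mem_Icc, Function.Embedding.coeFn_mk]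
  constructor
  · rintro ⟨m, hm, rfl⟩; omega
  · rintro ⟨h0, h1⟩; exact ⟨z.toNat, by omega, by omega⟩

lemma entry_zero (A B : ℤ → ℤ → ℂ) (a : ℕ)
    (hA1 : ∀ x y : ℤ, |x - y| > 2 ^ a → A x y = 0) (n : ℕ) (i j : Fin (2 ^ n))
    (h1 : 2 ^ a ≤ (i : ℕ)) (h2 : (i : ℕ) + 2 ^ a < 2 ^ n) :
    (trunc (opMul A B) n - trunc A n * trunc B n) i j = 0 := by
  simp only [Matrix.sub_apply, Matrix.mul_apply, trunc, opMul]
  set x : ℤ := ((i : ℕ) : ℤ) with hx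
  set y : ℤ := ((j : ℕ) : ℤ) with hy
  have hx1 : (2 : ℤ) ^ a ≤ x := by rw [hx]; exact_mod_cast h1
  have hx2 : x + 2 ^ a < ((2 ^ n : ℕ) : ℤ) := by rw [hx]; exact_mod_cast h2
  have key : ∑ᶠ z : ℤ, A x z * B z y
      = ∑ z ∈ Finset.Icc (0 : ℤ) (((2 ^ n : ℕ) : ℤ) - 1), A x z * B z y := by
    apply finsum_eq_sum_of_support_subset
    intro z hz
    simp only [Function.mem_support] at hz
    simp only [Finset.coe_Icc, Set.mem_Icc]
    by_contra hc
    push_neg at hc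
    have hAz : A x z = 0 := by
      apply hA1
      rw [gt_iff_lt, lt_abs]
      omega
    exact hz (by rw [hAz, zero_mul])
  have key2 : ∑ k : Fin (2 ^ n), A x ((k : ℕ) : ℤ) * B ((k : ℕ) : ℤ) y
      = ∑ z ∈ Finset.Icc (0 : ℤ) (((2 ^ n : ℕ) : ℤ) - 1), A x z * B z y := by
    rw [← map_range_eq_Icc (2 ^ n), Finset.sum_map, Fin.sum_univ_eq_sum_range
      (fun k => A x ((k : ℕ) : ℤ) * B ((k : ℕ) : ℤ) y)]
    rfl
  rw [key, ← key2, sub_self]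

/-- for periodic operators `A` and `B`,
`lim_n rank((AB)_n − A_n·B_n)/2^n = 0`. -/
theorem stmt11 (A B : ℤ → ℤ → ℂ) (hA : IsPeriodicOp A) (hB : IsPeriodicOp B) :
    Filter.Tendsto
      (fun n : ℕ => (Matrix.rank (trunc (opMul A B) n - trunc A n * trunc B n) : ℝ) / 2 ^ n)
      Filter.atTop (nhds 0) := by

  obtain ⟨a, -, hA1, -⟩ := hA
  have hrank : ∀ n : ℕ,
      (Matrix.rank (trunc (opMul A B) n - trunc A n * trunc B n)) ≤ 2 ^ (a + 1) := by
    intro n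
    classical
    set S : Finset (Fin (2 ^ n)) :=
      Finset.univ.filter (fun i => (i : ℕ) < 2 ^ a ∨ 2 ^ n ≤ (i : ℕ) + 2 ^ a) with hS
    have hcard : S.card ≤ 2 ^ (a + 1) := by
      have h1 : S.card ≤ (Finset.range (2 ^ a)).card + (Finset.range (2 ^ a)).card := by
        rw [hS, Finset.filter_or]
        refine (Finset.card_union_le _ _).trans (add_le_add ?_ ?_)
        · refine Finset.card_le_card_of_injOn (fun i => (i : ℕ)) ?_
            (fun i _ j _ h => Fin.val_injective h)
          intro i hi
          simp only [Finset.mem_coe, Finset.mem_filter, Finset.coe_range, Set.mem_Iio, Finset.mem_range] at hi ⊢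
          omega
        · refine Finset.card_le_card_of_injOn (fun i => (i : ℕ) + 2 ^ a - 2 ^ n) ?_ ?_
          · intro i hi
            simp only [Finset.mem_coe, Finset.mem_filter, Finset.coe_range, Set.mem_Iio, Finset.mem_range] at hi ⊢
            have hlt := i.isLt
            omega
          · intro i hi j hj h
            simp only [Finset.mem_coe, Finset.mem_filter] at hi hj
            dsimp only at h
            have hi2 := i.isLt
            have hj2 := j.isLt
            exact Fin.val_injective (by omega)
      simpa [pow_succ, mul_two] using h1
    refine le_trans (rank_le_card_support _ S ?_) hcard
    intro i hi
    funext j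
    simp only [hS, Finset.mem_filter, Finset.mem_univ, true_and] at hi
    push_neg at hi
    have := entry_zero A B a hA1 n i j (by omega) (by omega)
    simpa using this
  apply squeeze_zero (g := fun n : ℕ => ((2 : ℝ) ^ (a + 1)) / 2 ^ n)
  · intro n; positivity
  · intro n
    apply div_le_div_of_nonneg_right ?_ (by positivity)
    exact_mod_cast hrank n
  · have h2 : Tendsto (fun n : ℕ => ((2 : ℝ) ^ (a + 1)) * (2⁻¹ : ℝ) ^ n) atTop (nhds 0) := by
      have := (tendsto_pow_atTop_nhds_zero_of_lt_one (by norm_num : (0:ℝ) ≤ 2⁻¹)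
        (by norm_num : (2⁻¹:ℝ) < 1)).const_mul ((2 : ℝ) ^ (a + 1))
      simpa using this
    refine h2.congr (fun n => ?_)
    rw [div_eq_mul_inv, inv_pow]
end

section
/- For every periodic operator A, the sequence of normalized ranks rank(A_n)/2^n of the truncated matrices converges as n → ∞. -/
open Filter Topology

open Matrix Module

set_option maxHeartbeats 1000000


lemma myrank_add_le {m n : Type*} [Fintype m] [Fintype n] (A B : Matrix m n ℂ) :
    (A + B).rank ≤ A.rank + B.rank := by
  classical
  have h : LinearMap.range (A + B).mulVecLin ≤
      LinearMap.range A.mulVecLin ⊔ LinearMap.range B.mulVecLin := by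
    rw [Matrix.mulVecLin_add]
    rintro v ⟨x, rfl⟩
    exact Submodule.add_mem_sup (LinearMap.mem_range_self _ x) (LinearMap.mem_range_self _ x)
  calc (A + B).rank ≤ finrank ℂ ↥(LinearMap.range A.mulVecLin ⊔ LinearMap.range B.mulVecLin) :=
        Submodule.finrank_mono h
    _ ≤ _ := Submodule.finrank_add_le_finrank_add_finrank _ _

lemma myrank_le_card_cols {m n : Type*} [Fintype n] [DecidableEq n] [Fintype m]
    (M : Matrix m n ℂ) (s : Finset n) (h : ∀ j ∉ s, ∀ i, M i j = 0) :
    M.rank ≤ s.card := by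
  classical
  rw [Matrix.rank_eq_finrank_span_cols]
  have hsub : Set.range Mᵀ ⊆ insert 0 (↑(s.image (fun j => Mᵀ j)) : Set (m → ℂ)) := by
    rintro v ⟨j, rfl⟩
    by_cases hj : j ∈ s
    · exact Set.mem_insert_iff.2 (Or.inr (by simpa using ⟨j, hj, rfl⟩))
    · left; funext i; exact h j hj i
  calc finrank ℂ (Submodule.span ℂ (Set.range Mᵀ))
      ≤ finrank ℂ (Submodule.span ℂ (insert 0 (↑(s.image (fun j => Mᵀ j)) : Set (m → ℂ)))) :=
        Submodule.finrank_mono (Submodule.span_mono hsub)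
    _ = finrank ℂ (Submodule.span ℂ (↑(s.image (fun j => Mᵀ j)) : Set (m → ℂ))) := by
        rw [Submodule.span_insert_zero]
    _ ≤ (s.image (fun j => Mᵀ j)).card := finrank_span_finset_le_card _
    _ ≤ s.card := Finset.card_image_le

lemma myrank_le_card_rows {m n : Type*} [Fintype n] [DecidableEq m] [Fintype m]
    (M : Matrix m n ℂ) (s : Finset m) (h : ∀ i ∉ s, ∀ j, M i j = 0) :
    M.rank ≤ s.card := by
  rw [← Matrix.rank_transpose]
  exact myrank_le_card_cols Mᵀ s (fun i hi j => h i hi j)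

lemma my_finrank_prod {M N : Type*} [AddCommGroup M] [AddCommGroup N] [Module ℂ M] [Module ℂ N]
    [FiniteDimensional ℂ M] [FiniteDimensional ℂ N] (p : Submodule ℂ M) (q : Submodule ℂ N) :
    finrank ℂ ↥(p.prod q) = finrank ℂ ↥p + finrank ℂ ↥q := by
  rw [LinearMap.prod_eq_sup_map]
  have hdis : Disjoint (p.map (LinearMap.inl ℂ M N)) (q.map (LinearMap.inr ℂ M N)) := by
    rw [Submodule.disjoint_def]
    rintro ⟨a, b⟩ ha hb
    simp only [Submodule.mem_map, LinearMap.inl_apply, LinearMap.inr_apply, Prod.mk.injEq] at ha hb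
    obtain ⟨x, -, hx1, hx2⟩ := ha
    obtain ⟨y, -, hy1, hy2⟩ := hb
    simp [← hx2, ← hy1]
  have := Submodule.finrank_sup_add_finrank_inf_eq (p.map (LinearMap.inl ℂ M N))
    (q.map (LinearMap.inr ℂ M N))
  rw [hdis.eq_bot, finrank_bot, add_zero] at this
  rw [this,
    (Submodule.equivMapOfInjective (LinearMap.inl ℂ M N) LinearMap.inl_injective p).finrank_eq.symm,
    (Submodule.equivMapOfInjective (LinearMap.inr ℂ M N) LinearMap.inr_injective q).finrank_eq.symm]

lemma myrank_fromBlocks_diag {m n : Type*} [Fintype m] [Fintype n] [DecidableEq m] [DecidableEq n]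
    (P : Matrix m m ℂ) (Q : Matrix n n ℂ) :
    (Matrix.fromBlocks P 0 0 Q).rank = P.rank + Q.rank := by
  classical
  set e := LinearEquiv.sumArrowLequivProdArrow m n ℂ ℂ
  have key : (Matrix.fromBlocks P 0 0 Q).mulVecLin =
      (e.symm.toLinearMap.comp ((P.mulVecLin.prodMap Q.mulVecLin).comp e.toLinearMap)) := by
    apply LinearMap.ext
    intro x
    funext i
    cases i with
    | inl i =>
      simp [e, Matrix.mulVecLin_apply, Matrix.fromBlocks_mulVec, Matrix.mulVec, dotProduct,
        LinearEquiv.sumArrowLequivProdArrow]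
    | inr i =>
      simp [e, Matrix.mulVecLin_apply, Matrix.fromBlocks_mulVec, Matrix.mulVec, dotProduct,
        LinearEquiv.sumArrowLequivProdArrow]
  have hrange : LinearMap.range (Matrix.fromBlocks P 0 0 Q).mulVecLin
      = Submodule.map e.symm.toLinearMap
        ((LinearMap.range P.mulVecLin).prod (LinearMap.range Q.mulVecLin)) := by
    rw [key, LinearMap.range_comp, LinearMap.range_comp]
    congr 1
    rw [LinearEquiv.range, Submodule.map_top]
    ext ⟨u, v⟩
    simp only [LinearMap.mem_range, Submodule.mem_prod]
    constructor
    · rintro ⟨x, hx⟩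
      rw [LinearMap.prodMap_apply, Prod.ext_iff] at hx
      exact ⟨⟨x.1, hx.1⟩, ⟨x.2, hx.2⟩⟩
    · rintro ⟨⟨a, ha⟩, ⟨b, hb⟩⟩
      exact ⟨(a, b), by simp [LinearMap.prodMap_apply, ha, hb]⟩
  rw [Matrix.rank, Matrix.rank, Matrix.rank, hrange, LinearEquiv.finrank_map_eq]
  exact my_finrank_prod _ _

-- step lemma
lemma step_bounds (A : ℤ → ℤ → ℂ) (n : ℕ) (hband : ∀ x y : ℤ, |x - y| > 2 ^ n → A x y = 0)
    (hper : ∀ x y : ℤ, A (x + 2 ^ n) (y + 2 ^ n) = A x y) (m : ℕ) (hm : n ≤ m) :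
    (trunc A (m+1)).rank ≤ 2 * (trunc A m).rank + 2 * 2^n ∧
    2 * (trunc A m).rank ≤ (trunc A (m+1)).rank + 2 * 2^n := by
  classical
  have hiter : ∀ (k : ℕ) (x y : ℤ), A (x + 2^n * k) (y + 2^n * k) = A x y := by
    intro k
    induction k with
    | zero => simp
    | succ k ih =>
      intro x y
      rw [show (x + 2^n * ((k:ℕ)+1:ℕ) : ℤ) = (x + 2^n * k) + 2^n by push_cast; ring,
        show (y + 2^n * ((k:ℕ)+1:ℕ) : ℤ) = (y + 2^n * k) + 2^n by push_cast; ring, hper, ih]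
  have hP2m : ∀ x y : ℤ, A (x + 2^m) (y + 2^m) = A x y := by
    intro x y
    have h2m : (2:ℤ)^m = 2^n * ((2^(m-n) : ℕ) : ℤ) := by
      push_cast
      rw [← pow_add]
      congr 1
      omega
    rw [h2m]
    exact hiter _ _ _
  have h2 : 2^(m+1) = 2^m + 2^m := by rw [pow_succ]; ring
  set N := 2^m with hN
  let e : Fin N ⊕ Fin N ≃ Fin (2^(m+1)) := finSumFinEquiv.trans (finCongr h2.symm)
  have hval1 : ∀ i : Fin N, ((e (Sum.inl i) : Fin (2^(m+1))) : ℕ) = (i : ℕ) := by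
    intro i; simp [e]
  have hval2 : ∀ i : Fin N, ((e (Sum.inr i) : Fin (2^(m+1))) : ℕ) = N + (i : ℕ) := by
    intro i; simp [e, Nat.add_comm]
  let B : Matrix (Fin N) (Fin N) ℂ := fun i j => A ((i:ℕ):ℤ) (((N + (j:ℕ) : ℕ)):ℤ)
  let C : Matrix (Fin N) (Fin N) ℂ := fun i j => A (((N + (i:ℕ) : ℕ)):ℤ) ((j:ℕ):ℤ)
  set P := trunc A m with hP
  have hM' : (trunc A (m+1)).submatrix e e = Matrix.fromBlocks P B C P := by
    ext i j
    rcases i with i | i <;> rcases j with j | j <;>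
      simp only [Matrix.submatrix_apply, Matrix.fromBlocks_apply₁₁, Matrix.fromBlocks_apply₁₂,
        Matrix.fromBlocks_apply₂₁, Matrix.fromBlocks_apply₂₂, trunc, hval1, hval2]
    · rfl
    · rfl
    · rfl
    · show A _ _ = A _ _
      rw [show ((((N + (i:ℕ)):ℕ)):ℤ) = ((i:ℕ):ℤ) + 2^m by push_cast [hN]; ring,
        show ((((N + (j:ℕ)):ℕ)):ℤ) = ((j:ℕ):ℤ) + 2^m by push_cast [hN]; ring]
      exact hP2m _ _
  have hrank : (trunc A (m+1)).rank = (Matrix.fromBlocks P B C P).rank := by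
    rw [← hM']
    have := Matrix.rank_reindex e.symm e.symm (trunc A (m+1))
    simpa [Matrix.reindex_apply] using this.symm
  -- support sets
  have hpow : 2^n ≤ N := Nat.pow_le_pow_right (by norm_num) hm
  let s : Finset (Fin N) := (Finset.univ : Finset (Fin (2^n))).image (Fin.castLE hpow)
  have hscard : s.card ≤ 2^n := le_trans Finset.card_image_le (by simp)
  have hmem : ∀ j : Fin N, (j:ℕ) < 2^n → j ∈ s := by
    intro j hj
    exact Finset.mem_image.2 ⟨⟨(j:ℕ), hj⟩, Finset.mem_univ _, by ext; simp⟩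
  have hBzero : ∀ j : Fin N, j ∉ s → ∀ i, B i j = 0 := by
    intro j hj i
    have hj' : 2^n ≤ (j:ℕ) := by
      by_contra h
      exact hj (hmem j (by omega))
    apply hband
    have hi : ((i:ℕ):ℤ) < 2^m := by exact_mod_cast i.isLt
    have hj'' : (2^n : ℤ) ≤ ((j:ℕ):ℤ) := by exact_mod_cast hj'
    have hNc : ((N:ℕ):ℤ) = 2^m := by push_cast [hN]; ring
    rw [abs_sub_comm]
    rw [abs_of_nonneg (by push_cast [hN]; linarith [pow_pos (by norm_num : (0:ℤ) < 2) n])]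
    push_cast [hN]
    linarith
  have hCzero : ∀ i : Fin N, i ∉ s → ∀ j, C i j = 0 := by
    intro i hi j
    have hi' : 2^n ≤ (i:ℕ) := by
      by_contra h
      exact hi (hmem i (by omega))
    apply hband
    have hj : ((j:ℕ):ℤ) < 2^m := by exact_mod_cast j.isLt
    have hi'' : (2^n : ℤ) ≤ ((i:ℕ):ℤ) := by exact_mod_cast hi'
    rw [abs_of_nonneg (by push_cast [hN]; linarith [pow_pos (by norm_num : (0:ℤ) < 2) n])]
    push_cast [hN]
    linarith
  let s' : Finset (Fin N ⊕ Fin N) := s.image Sum.inr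
  have hs'card : s'.card ≤ 2^n := le_trans Finset.card_image_le hscard
  have hrankB : ∀ B' : Matrix (Fin N) (Fin N) ℂ, (∀ j ∉ s, ∀ i, B' i j = 0) →
      (Matrix.fromBlocks 0 B' 0 0 : Matrix (Fin N ⊕ Fin N) (Fin N ⊕ Fin N) ℂ).rank ≤ 2^n := by
    intro B' hB'
    refine le_trans (myrank_le_card_cols _ s' ?_) hs'card
    rintro (j | j) hj i
    · rcases i with i | i <;> simp [Matrix.fromBlocks]
    · have hjs : j ∉ s := fun h => hj (Finset.mem_image.2 ⟨j, h, rfl⟩)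
      rcases i with i | i
      · simpa [Matrix.fromBlocks] using hB' j hjs i
      · simp [Matrix.fromBlocks]
  have hrankC : ∀ C' : Matrix (Fin N) (Fin N) ℂ, (∀ i ∉ s, ∀ j, C' i j = 0) →
      (Matrix.fromBlocks 0 0 C' 0 : Matrix (Fin N ⊕ Fin N) (Fin N ⊕ Fin N) ℂ).rank ≤ 2^n := by
    intro C' hC'
    refine le_trans (myrank_le_card_rows _ s' ?_) hs'card
    rintro (i | i) hi j
    · rcases j with j | j <;> simp [Matrix.fromBlocks]
    · have his : i ∉ s := fun h => hi (Finset.mem_image.2 ⟨i, h, rfl⟩)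
      rcases j with j | j
      · simpa [Matrix.fromBlocks] using hC' i his j
      · simp [Matrix.fromBlocks]
  have hdecomp : Matrix.fromBlocks P B C P =
      Matrix.fromBlocks P 0 0 P + Matrix.fromBlocks 0 B 0 0 + Matrix.fromBlocks 0 0 C 0 := by
    ext i j
    rcases i with i | i <;> rcases j with j | j <;> simp [Matrix.fromBlocks]
  have hdiag : (Matrix.fromBlocks P 0 0 P : Matrix (Fin N ⊕ Fin N) (Fin N ⊕ Fin N) ℂ).rank
      = P.rank + P.rank := myrank_fromBlocks_diag P P
  constructor
  · rw [hrank, hdecomp]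
    calc (Matrix.fromBlocks P 0 0 P + Matrix.fromBlocks 0 B 0 0 + Matrix.fromBlocks 0 0 C 0).rank
        ≤ (Matrix.fromBlocks P 0 0 P + Matrix.fromBlocks 0 B 0 0).rank
            + (Matrix.fromBlocks 0 0 C 0 : Matrix (Fin N ⊕ Fin N) (Fin N ⊕ Fin N) ℂ).rank :=
          myrank_add_le _ _
      _ ≤ (Matrix.fromBlocks P 0 0 P : Matrix (Fin N ⊕ Fin N) (Fin N ⊕ Fin N) ℂ).rank
            + (Matrix.fromBlocks 0 B 0 0 : Matrix (Fin N ⊕ Fin N) (Fin N ⊕ Fin N) ℂ).rank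
            + (Matrix.fromBlocks 0 0 C 0 : Matrix (Fin N ⊕ Fin N) (Fin N ⊕ Fin N) ℂ).rank := by
          gcongr
          exact myrank_add_le _ _
      _ ≤ (P.rank + P.rank) + 2^n + 2^n := by
          gcongr
          · rw [hdiag]
          · exact hrankB B hBzero
          · exact hrankC C hCzero
      _ = 2 * P.rank + 2 * 2^n := by ring
  · have hdecomp2 : (Matrix.fromBlocks P 0 0 P : Matrix (Fin N ⊕ Fin N) (Fin N ⊕ Fin N) ℂ) =
        Matrix.fromBlocks P B C P + Matrix.fromBlocks 0 (-B) 0 0 + Matrix.fromBlocks 0 0 (-C) 0 := by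
      ext i j
      rcases i with i | i <;> rcases j with j | j <;> simp [Matrix.fromBlocks]
    have h1 : 2 * P.rank ≤ (Matrix.fromBlocks P B C P).rank + 2^n + 2^n := by
      rw [two_mul, ← hdiag, hdecomp2]
      calc (Matrix.fromBlocks P B C P + Matrix.fromBlocks 0 (-B) 0 0
              + Matrix.fromBlocks 0 0 (-C) 0).rank
          ≤ (Matrix.fromBlocks P B C P + Matrix.fromBlocks 0 (-B) 0 0).rank
              + (Matrix.fromBlocks 0 0 (-C) 0 : Matrix (Fin N ⊕ Fin N) (Fin N ⊕ Fin N) ℂ).rank :=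
            myrank_add_le _ _
        _ ≤ (Matrix.fromBlocks P B C P).rank
              + (Matrix.fromBlocks 0 (-B) 0 0 : Matrix (Fin N ⊕ Fin N) (Fin N ⊕ Fin N) ℂ).rank
              + (Matrix.fromBlocks 0 0 (-C) 0 : Matrix (Fin N ⊕ Fin N) (Fin N ⊕ Fin N) ℂ).rank := by
            gcongr
            exact myrank_add_le _ _
        _ ≤ (Matrix.fromBlocks P B C P).rank + 2^n + 2^n := by
            gcongr
            · exact hrankB (-B) (fun j hj i => by simp [hBzero j hj i])
            · exact hrankC (-C) (fun i hi j => by simp [hCzero i hi j])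
    rw [hrank]
    omega

/-- for every periodic operator `A` the normalized ranks
`rank(A_n)/2^n` of the truncated matrices converge as `n → ∞`. -/
theorem stmt12 (A : ℤ → ℤ → ℂ) (hA : IsPeriodicOp A) :
    ∃ L : ℝ, Filter.Tendsto (fun n : ℕ => (Matrix.rank (trunc A n) : ℝ) / 2 ^ n)
      Filter.atTop (nhds L) := by
  obtain ⟨n, -, hband, hper⟩ := hA
  set f : ℕ → ℝ := fun k => (Matrix.rank (trunc A k) : ℝ) / 2 ^ k with hf
  have hf01 : ∀ k, 0 ≤ f k ∧ f k ≤ 1 := by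
    intro k
    constructor
    · positivity
    · rw [hf, div_le_one (by positivity)]
      have := Matrix.rank_le_card_width (trunc A k)
      simp only [Fintype.card_fin] at this
      exact_mod_cast this
  have hstep : ∀ m : ℕ, dist (f m) (f (m+1)) ≤ (2^n : ℝ) * (1/2)^m := by
    intro m
    have hrhs : (2^n : ℝ) * (1/2)^m = 2^n / 2^m := by
      rw [div_pow, one_pow, one_div, div_eq_mul_inv]
    rcases le_or_gt n m with hm | hm
    · obtain ⟨h1, h2⟩ := step_bounds A n hband hper m hm
      have habs : |2 * ((trunc A m).rank : ℝ) - ((trunc A (m+1)).rank : ℝ)| ≤ 2 * 2^n := by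
        have h1' : ((trunc A (m+1)).rank : ℝ) ≤ 2 * ((trunc A m).rank : ℝ) + 2 * 2^n := by
          exact_mod_cast h1
        have h2' : 2 * ((trunc A m).rank : ℝ) ≤ ((trunc A (m+1)).rank : ℝ) + 2 * 2^n := by
          exact_mod_cast h2
        rw [abs_le]
        constructor <;> linarith
      have h2m1 : (0:ℝ) < 2^(m+1) := by positivity
      rw [Real.dist_eq, hrhs]
      have hfm : f m - f (m+1) = (2 * ((trunc A m).rank : ℝ) - ((trunc A (m+1)).rank : ℝ)) / 2^(m+1) := by
        rw [hf]
        field_simp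
        ring
      rw [hfm, abs_div, abs_of_pos h2m1, div_le_div_iff₀ h2m1 (by positivity)]
      calc |2 * ((trunc A m).rank : ℝ) - ((trunc A (m+1)).rank : ℝ)| * 2^m
          ≤ (2 * 2^n) * 2^m := mul_le_mul_of_nonneg_right habs (by positivity)
        _ = 2^n * 2^(m+1) := by ring
    · have hb : dist (f m) (f (m+1)) ≤ 1 := by
        rw [Real.dist_eq, abs_le]
        obtain ⟨h1, h2⟩ := hf01 m
        obtain ⟨h3, h4⟩ := hf01 (m+1)
        constructor <;> linarith
      refine le_trans hb ?_
      rw [hrhs, le_div_iff₀ (by positivity), one_mul]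
      exact_mod_cast Nat.pow_le_pow_right (by norm_num) hm.le
  have hcauchy : CauchySeq f :=
    cauchySeq_of_le_geometric (1/2) (2^n : ℝ) (by norm_num) hstep
  exact cauchySeq_tendsto_of_complete hcauchy
end

section
/- Let A be a periodic operator, let k ≥ 1, and let l ≥ 1 be such that A(x,y) = 0 whenever |x−y| ≥ l. Let n be such that 2^n is a period of A (i.e., A(x+2^n,y+2^n) = A(x,y)). Then for every integer x with 2lk < x < 2^n − 2lk, the diagonal entry ((A*A)^k)(x,x) of the k-th power of A*A in the algebra of periodic operators equals the (x,x) entry of the matrix ((A_n)ᴴ A_n)^k, where (A_n)ᴴ is the conjugate transpose of A_n. -/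
open Filter Topology Matrix

/-- The adjoint `A*(x,y) = conj (A(y,x))`. -/
def opAdj (A : ℤ → ℤ → ℂ) : ℤ → ℤ → ℂ := fun x y => starRingEnd ℂ (A y x)

/-- The identity operator `1(x,y) = δ_{x,y}`. -/
def opOne : ℤ → ℤ → ℂ := fun x y => if x = y then 1 else 0

/-- Powers in the algebra of periodic operators. -/
noncomputable def opPow (A : ℤ → ℤ → ℂ) : ℕ → (ℤ → ℤ → ℂ)
  | 0 => opOne
  | k + 1 => opMul (opPow A k) A

def finZ (n : ℕ) : Finset ℤ :=
  (Finset.univ : Finset (Fin (2^n))).map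
    ⟨fun i : Fin (2^n) => ((i : ℕ) : ℤ), fun a b h => Fin.val_injective (Int.natCast_inj.mp h)⟩

lemma mem_finZ {n : ℕ} {z : ℤ} : z ∈ finZ n ↔ 0 ≤ z ∧ z < 2^n := by
  constructor
  · rintro h
    rw [finZ, Finset.mem_map] at h
    obtain ⟨b, -, hb⟩ := h
    have hb' : ((b : ℕ) : ℤ) = z := hb
    have := b.isLt
    constructor
    · omega
    · rw [← hb']
      exact_mod_cast Nat.cast_lt.mpr b.isLt
  · rintro ⟨h0, h1⟩
    rw [finZ, Finset.mem_map]
    refine ⟨⟨z.toNat, ?_⟩, Finset.mem_univ _, ?_⟩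
    · have : ((2:ℤ)^n) = ((2^n : ℕ) : ℤ) := by push_cast; ring
      omega
    · show ((z.toNat : ℕ) : ℤ) = z
      exact Int.toNat_of_nonneg h0

lemma Bzero (A : ℤ → ℤ → ℂ) (l : ℕ)
    (hsupp : ∀ x y : ℤ, (l:ℤ) ≤ |x - y| → A x y = 0)
    (x y : ℤ) (h : (2*l : ℤ) ≤ |x - y|) : opMul (opAdj A) A x y = 0 := by
  have hz : ∀ z : ℤ, opAdj A x z * A z y = 0 := by
    intro z
    by_cases h1 : (l:ℤ) ≤ |z - x|
    · simp [opAdj, hsupp _ _ h1]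
    · push_neg at h1
      have tri : |x - y| ≤ |x - z| + |z - y| := abs_sub_le x z y
      rw [abs_sub_comm x z] at tri
      have : (l:ℤ) ≤ |z - y| := by linarith
      simp [hsupp _ _ this]
  simp only [opMul]
  rw [finsum_congr hz]
  simp

lemma Powzero (A : ℤ → ℤ → ℂ) (l : ℕ)
    (hsupp : ∀ x y : ℤ, (l:ℤ) ≤ |x - y| → A x y = 0) :
    ∀ (k : ℕ) (x y : ℤ), (2*l*k : ℤ) < |x - y| →
      opPow (opMul (opAdj A) A) k x y = 0 := by
  intro k
  induction k with
  | zero =>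
    intro x y h
    simp only [Nat.cast_zero, mul_zero] at h
    have : x ≠ y := by intro he; rw [he] at h; simp at h
    simp [opPow, opOne, this]
  | succ k ih =>
    intro x y h
    have hz : ∀ z : ℤ, opPow (opMul (opAdj A) A) k x z * opMul (opAdj A) A z y = 0 := by
      intro z
      by_cases h1 : (2*l*k : ℤ) < |x - z|
      · rw [ih x z h1, zero_mul]
      · push_neg at h1
        have tri : |x - y| ≤ |x - z| + |z - y| := abs_sub_le x z y
        have : (2*l : ℤ) ≤ |z - y| := by push_cast at h ⊢; nlinarith
        rw [Bzero A l hsupp z y this, mul_zero]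
    have hrfl : opMul (opPow (opMul (opAdj A) A) k) (opMul (opAdj A) A) x y =
        ∑ᶠ z : ℤ, opPow (opMul (opAdj A) A) k x z * opMul (opAdj A) A z y := rfl
    show opMul (opPow (opMul (opAdj A) A) k) (opMul (opAdj A) A) x y = 0
    rw [hrfl, finsum_congr hz]
    simp

lemma entry (A : ℤ → ℤ → ℂ) (l n : ℕ)
    (hsupp : ∀ x y : ℤ, (l:ℤ) ≤ |x - y| → A x y = 0)
    (i j : Fin (2^n)) (h1 : (l:ℤ) ≤ ((i:ℕ):ℤ)) (h2 : ((i:ℕ):ℤ) + l ≤ 2^n) :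
    opMul (opAdj A) A ((i:ℕ):ℤ) ((j:ℕ):ℤ) = ((trunc A n)ᴴ * trunc A n) i j := by
  rw [Matrix.mul_apply]
  simp only [opMul, opAdj]
  rw [finsum_eq_sum_of_support_subset _ (s := finZ n) ?_]
  · simp only [finZ]
    rw [Finset.sum_map]
    simp only [Matrix.conjTranspose_apply, trunc, Function.Embedding.coeFn_mk, RCLike.star_def]
    rfl
  · intro z hz
    simp only [Function.mem_support] at hz
    have hAz : A z ((i:ℕ):ℤ) ≠ 0 := fun h => hz (by simp [h])
    have habs : |z - ((i:ℕ):ℤ)| < l := by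
      by_contra h; push_neg at h; exact hAz (hsupp _ _ h)
    rw [abs_lt] at habs
    exact Finset.mem_coe.mpr (mem_finZ.mpr ⟨by linarith, by linarith⟩)

lemma main_lemma (A : ℤ → ℤ → ℂ) (l n : ℕ) (hl : 1 ≤ l)
    (hsupp : ∀ x y : ℤ, (l:ℤ) ≤ |x - y| → A x y = 0) :
    ∀ (k : ℕ) (i j : Fin (2^n)), ((2*l*k : ℕ):ℤ) < ((i:ℕ):ℤ) →
      ((i:ℕ):ℤ) < 2^n - ((2*l*k : ℕ):ℤ) →
      opPow (opMul (opAdj A) A) k ((i:ℕ):ℤ) ((j:ℕ):ℤ) =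
        (((trunc A n)ᴴ * trunc A n) ^ k) i j := by
  intro k
  induction k with
  | zero =>
    intro i j _ _
    simp only [opPow, opOne, pow_zero, Matrix.one_apply]
    by_cases h : i = j
    · simp [h]
    · have : ((i:ℕ):ℤ) ≠ ((j:ℕ):ℤ) := by
        intro he; exact h (Fin.val_injective (by exact_mod_cast he))
      simp [h, this]
  | succ k ih =>
    intro i j hi1 hi2
    push_cast at hi1 hi2
    have hrfl : opMul (opPow (opMul (opAdj A) A) k) (opMul (opAdj A) A) ((i:ℕ):ℤ) ((j:ℕ):ℤ) =
        ∑ᶠ z : ℤ, opPow (opMul (opAdj A) A) k ((i:ℕ):ℤ) z * opMul (opAdj A) A z ((j:ℕ):ℤ) := rfl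
    show opMul (opPow (opMul (opAdj A) A) k) (opMul (opAdj A) A) _ _ = _
    rw [pow_succ, Matrix.mul_apply, hrfl]
    rw [finsum_eq_sum_of_support_subset _ (s := finZ n) ?_]
    · simp only [finZ]
      rw [Finset.sum_map]
      apply Finset.sum_congr rfl
      intro w _
      show opPow (opMul (opAdj A) A) k ((i:ℕ):ℤ) ((w:ℕ):ℤ) * opMul (opAdj A) A ((w:ℕ):ℤ) ((j:ℕ):ℤ) = _
      have hIH : opPow (opMul (opAdj A) A) k ((i:ℕ):ℤ) ((w:ℕ):ℤ) =
          (((trunc A n)ᴴ * trunc A n) ^ k) i w := by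
        apply ih <;> push_cast <;> nlinarith
      rw [hIH]
      by_cases hv : (((trunc A n)ᴴ * trunc A n) ^ k) i w = 0
      · rw [hv, zero_mul, zero_mul]
      · have hne : opPow (opMul (opAdj A) A) k ((i:ℕ):ℤ) ((w:ℕ):ℤ) ≠ 0 := by
          rw [hIH]; exact hv
        have hdist : |((i:ℕ):ℤ) - ((w:ℕ):ℤ)| ≤ 2*l*k := by
          by_contra h; push_neg at h
          exact hne (Powzero A l hsupp k _ _ h)
        rw [abs_le] at hdist
        congr 1
        apply entry A l n hsupp
        · push_cast; nlinarith
        · push_cast; nlinarith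
    · intro z hz
      simp only [Function.mem_support] at hz
      have hne : opPow (opMul (opAdj A) A) k ((i:ℕ):ℤ) z ≠ 0 := fun h => hz (by simp [h])
      have hdist : |((i:ℕ):ℤ) - z| ≤ 2*l*k := by
        by_contra h; push_neg at h
        exact hne (Powzero A l hsupp k _ _ h)
      rw [abs_le] at hdist
      refine Finset.mem_coe.mpr (mem_finZ.mpr ⟨by nlinarith, by nlinarith⟩)

/-- if `A` is a periodic operator with `A(x,y) = 0` for `|x−y| ≥ l`, and
`2^n` is a period of `A`, then for `2lk < x < 2^n − 2lk` the diagonal entry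
`((A*A)^k)(x,x)` (computed in the algebra of periodic operators) equals the `(x,x)`
entry of the matrix `((A_n)ᴴ A_n)^k`. -/
theorem stmt14 (A : ℤ → ℤ → ℂ) (hA : IsPeriodicOp A) (k l : ℕ) (hk : 1 ≤ k) (hl : 1 ≤ l)
    (hsupp : ∀ x y : ℤ, (l : ℤ) ≤ |x - y| → A x y = 0) (n : ℕ)
    (hper : ∀ x y : ℤ, A (x + 2 ^ n) (y + 2 ^ n) = A x y)
    (x : ℤ) (hx1 : ((2 * l * k : ℕ) : ℤ) < x) (hx2 : x < 2 ^ n - ((2 * l * k : ℕ) : ℤ))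
    (i : Fin (2 ^ n)) (hi : ((i : ℕ) : ℤ) = x) :
    opPow (opMul (opAdj A) A) k x x = (((trunc A n)ᴴ * trunc A n) ^ k) i i := by
  subst hi
  exact main_lemma A l n hl hsupp k i i hx1 hx2
end
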